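/- Let M_1 = [[1,1,1],[0,1,0],[1,1,0]], M_2 = [[0,1,0],[0,1,0],[1,1,1]], and let s_1,...,s_{2t} be positive integers with s_1 ≥ 2. Then the sum of all entries of M_1^{s_1-1} M_2^{s_2} ⋯ M_1^{s_{2t-1}} M_2^{s_{2t}} is strictly less than ω_1^{s_1+s_3+⋯+s_{2t-1}} · (1 + 2 Σ_{i=1}^t s_{2i}), where ω_1^m denotes the sum of all entries of M_1^{m-1}. -/

import Mathlib

namespace Thm3UB

def Nm : Matrix (Fin 3) (Fin 3) ℤ := !![1,1,1;0,1,0;1,1,0]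
def Km : Matrix (Fin 3) (Fin 3) ℤ := !![0,1,0;0,1,0;1,1,1]

lemma N00 : Nm 0 0 = 1 := rfl
lemma N01 : Nm 0 1 = 1 := rfl
lemma N02 : Nm 0 2 = 1 := rfl
lemma N10 : Nm 1 0 = 0 := rfl
lemma N11 : Nm 1 1 = 1 := rfl
lemma N12 : Nm 1 2 = 0 := rfl
lemma N20 : Nm 2 0 = 1 := rfl
lemma N21 : Nm 2 1 = 1 := rfl
lemma N22 : Nm 2 2 = 0 := rfl

lemma N_nonneg : ∀ i j, 0 ≤ Nm i j := by
  intro i j; fin_cases i <;> fin_cases j <;> simp [Nm]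

lemma Npow_nonneg (k : ℕ) : ∀ i j, 0 ≤ (Nm ^ k) i j := by
  induction k with
  | zero => intro i j; rw [pow_zero, Matrix.one_apply]; split <;> norm_num
  | succ n ih =>
    intro i j
    rw [pow_succ, Matrix.mul_apply]
    exact Finset.sum_nonneg fun k _ => mul_nonneg (ih i k) (N_nonneg k j)

lemma Npow_col (k : ℕ) : ∀ i, (Nm ^ (k+1)) i 2 ≤ (Nm ^ (k+1)) i 0 := by
  intro i
  rw [pow_succ, Matrix.mul_apply, Matrix.mul_apply, Fin.sum_univ_three, Fin.sum_univ_three,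
    N02, N12, N22, N00, N10, N20]
  have h2 := Npow_nonneg k i 2
  linarith

lemma Npow_row1 (k : ℕ) : ∀ j, (Nm ^ k) 1 j = if j = 1 then 1 else 0 := by
  induction k with
  | zero => intro j; rw [pow_zero, Matrix.one_apply]; fin_cases j <;> simp
  | succ n ih =>
    intro j
    rw [pow_succ', Matrix.mul_apply, Fin.sum_univ_three, N10, N11, N12, ih j]
    ring

lemma Npow_col0_mono (m s : ℕ) (i : Fin 3) : (Nm ^ m) i 0 ≤ (Nm ^ (m + s)) i 0 := by
  induction s with
  | zero => simp
  | succ n ih =>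
    have h2 := Npow_nonneg (m+n) i 2
    calc (Nm ^ m) i 0 ≤ (Nm ^ (m+n)) i 0 := ih
    _ ≤ (Nm ^ (m+n+1)) i 0 := by
        rw [pow_succ, Matrix.mul_apply, Fin.sum_univ_three, N00, N10, N20]
        linarith

lemma Kpow (r : ℕ) : Km ^ (r+1) = !![0,1,0;0,1,0;1,2*(r:ℤ)+1,1] := by
  induction r with
  | zero => rw [pow_one]; norm_num [Km]
  | succ n ih =>
    rw [pow_succ, ih]
    ext i j
    fin_cases i <;> fin_cases j <;>
      simp [Km, Matrix.mul_apply, Fin.sum_univ_three, Matrix.vecHead, Matrix.vecTail] <;>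
      push_cast <;> ring


/-- Multiply the invariant bound by `Km ^ (r+1)` on the right. -/
lemma step_K (m : ℕ) (Q : Matrix (Fin 3) (Fin 3) ℤ) (d : ℤ) (hd : 0 ≤ d) (r : ℕ)
    (hQ : ∀ i j, Q i j ≤ (Nm ^ (m+1)) i j + d * (Nm ^ (m+1)) i 0 * (if j = 1 then 1 else 0)) :
    ∀ i j, (Q * Km ^ (r+1)) i j ≤
      (Nm ^ (m+1)) i j + (d + 2*((r:ℤ)+1)) * (Nm ^ (m+1)) i 0 * (if j = 1 then 1 else 0) := by
  intro i j
  set X := Nm ^ (m+1) with hX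
  have hQ0 := hQ i 0
  have hQ1 := hQ i 1
  have hQ2 := hQ i 2
  norm_num at hQ0 hQ1 hQ2
  rw [if_neg (by decide : ¬((2:Fin 3) = 1)), add_zero] at hQ2
  have hcol := Npow_col m i
  have h0 := Npow_nonneg (m+1) i 0
  have h2 := Npow_nonneg (m+1) i 2
  have hr : (0:ℤ) ≤ 2*(r:ℤ) + 1 := by positivity
  rw [Matrix.mul_apply, Fin.sum_univ_three, Kpow r]
  have key : (2*(r:ℤ)+1) * Q i 2 ≤ (2*(r:ℤ)+1) * X i 0 :=
    mul_le_mul_of_nonneg_left (hQ2.trans hcol) hr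
  fin_cases j <;>
    simp [Matrix.vecHead, Matrix.vecTail, (by decide : ¬((2:Fin 3) = 1)),
      (by decide : ¬((0:Fin 3) = 1))] <;>
    nlinarith [key]

/-- Multiply the invariant bound by `Nm ^ s` on the right. -/
lemma step_N (m : ℕ) (Q : Matrix (Fin 3) (Fin 3) ℤ) (d : ℤ) (hd : 0 ≤ d) (s : ℕ)
    (hQ : ∀ i j, Q i j ≤ (Nm ^ m) i j + d * (Nm ^ m) i 0 * (if j = 1 then 1 else 0)) :
    ∀ i j, (Q * Nm ^ s) i j ≤
      (Nm ^ (m+s)) i j + d * (Nm ^ (m+s)) i 0 * (if j = 1 then 1 else 0) := by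
  intro i j
  have hle : ∀ k, Q i k * (Nm ^ s) k j ≤
      ((Nm ^ m) i k + d * (Nm ^ m) i 0 * (if k = 1 then 1 else 0)) * (Nm ^ s) k j :=
    fun k => mul_le_mul_of_nonneg_right (hQ i k) (Npow_nonneg s k j)
  have h1 : (Q * Nm ^ s) i j ≤ ((Nm ^ m) * (Nm ^ s)) i j + d * (Nm ^ m) i 0 * (Nm ^ s) 1 j := by
    rw [Matrix.mul_apply, Matrix.mul_apply, Fin.sum_univ_three, Fin.sum_univ_three]
    have e0 := hle 0
    have e1 := hle 1
    have e2 := hle 2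
    norm_num at e0 e1 e2
    rw [if_neg (by decide : ¬((2:Fin 3) = 1)), add_zero] at e2
    linarith
  rw [← pow_add] at h1
  refine h1.trans ?_
  rw [Npow_row1 s j]
  by_cases hj : j = 1
  · subst hj
    rw [if_pos rfl, mul_one, mul_one]
    have := mul_le_mul_of_nonneg_left (Npow_col0_mono m s i) hd
    linarith
  · simp [hj]
end Thm3UB

open Thm3UB

/-- Upper bound of Theorem 3: the sum of all entries of
`M₁^(s₁-1) M₂^(s₂) ⋯ M₁^(s_{2t-1}) M₂^(s_{2t})` is strictly less than
`ω₁^(s₁+s₃+⋯+s_{2t-1}) (1 + 2 ∑_{i=1}^t s_{2i})`, where `ω₁^m` is the sum of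
all entries of `M₁^(m-1)`. -/
theorem alternating_product_upper_bound (M₁ M₂ : Matrix (Fin 3) (Fin 3) ℤ)
    (hM₁ : M₁ = !![1,1,1;0,1,0;1,1,0]) (hM₂ : M₂ = !![0,1,0;0,1,0;1,1,1])
    (s : ℕ → ℕ) (hs : ∀ i, 1 ≤ s i) (hs1 : 2 ≤ s 1)
    (ω₁ : ℕ → ℤ) (hω₁ : ∀ m, ω₁ m = ∑ i, ∑ j, (M₁ ^ (m - 1)) i j)
    (P : ℕ → Matrix (Fin 3) (Fin 3) ℤ) (hP0 : P 0 = 1)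
    (hP : ∀ i, P (i + 1) =
      P i * M₁ ^ (if i = 0 then s 1 - 1 else s (2 * i + 1)) * M₂ ^ (s (2 * i + 2)))
    (t : ℕ) (ht : 1 ≤ t) :
    ∑ i, ∑ j, (P t) i j <
      ω₁ (∑ i ∈ Finset.range t, s (2 * i + 1)) *
        (1 + 2 * ∑ i ∈ Finset.range t, (s (2 * i + 2) : ℤ)) := by
  have hM1 : M₁ = Nm := hM₁
  have hM2 : M₂ = Km := hM₂
  subst hM1 hM2
  set S : ℕ → ℕ := fun t => ∑ i ∈ Finset.range t, s (2 * i + 1) with hS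
  set D : ℕ → ℤ := fun t => ∑ i ∈ Finset.range t, (s (2 * i + 2) : ℤ) with hD
  have hDnn : ∀ t, 0 ≤ D t := fun t => Finset.sum_nonneg fun i _ => by positivity
  have hSlb : ∀ u, 1 ≤ u → s 1 ≤ S u := by
    intro u hu
    have : s (2 * 0 + 1) ≤ S u :=
      Finset.single_le_sum (f := fun i => s (2 * i + 1)) (fun i _ => Nat.zero_le _)
        (Finset.mem_range.mpr hu)
    simpa using this
  -- the invariant
  have key : ∀ u, 1 ≤ u → ∀ i j, P u i j ≤
      (Nm ^ (S u - 1)) i j + (2 * D u) * (Nm ^ (S u - 1)) i 0 * (if j = 1 then 1 else 0) := by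
    intro u hu
    induction u, hu using Nat.le_induction with
    | base =>
      have hP1 : P 1 = Nm ^ (s 1 - 1) * Km ^ (s 2) := by
        have := hP 0
        norm_num at this
        rw [this, hP0, one_mul]
      obtain ⟨m, hm⟩ : ∃ m, s 1 - 1 = m + 1 := ⟨s 1 - 2, by have h1 := hs1; omega⟩
      obtain ⟨r, hr⟩ : ∃ r, s 2 = r + 1 := ⟨s 2 - 1, by have h1 := hs 2; omega⟩
      have hQ : ∀ i j, (Nm ^ (m+1)) i j ≤
          (Nm ^ (m+1)) i j + 0 * (Nm ^ (m+1)) i 0 * (if j = 1 then 1 else 0) := by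
        intro i j; simp
      have h := step_K m (Nm ^ (m+1)) 0 le_rfl r hQ
      intro i j
      have hS1 : S 1 - 1 = m + 1 := by
        have hs11 : S 1 = s 1 := by simp [hS]
        omega
      have hD1 : D 1 = ((s 2 : ℤ)) := by simp [hD, Finset.sum_range_one]
      have h2 : ((s 2 : ℤ)) = (r : ℤ) + 1 := by exact_mod_cast congrArg (Nat.cast : ℕ → ℤ) hr
      rw [hP1, hm, hr, hS1, hD1, h2]
      have := h i j
      linarith [this]
    | succ u hu ih =>
      have hne : u ≠ 0 := by omega
      have hPu : P (u+1) = P u * Nm ^ (s (2*u+1)) * Km ^ (s (2*u+2)) := by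
        have := hP u
        rw [if_neg hne] at this
        exact this
      have h1 := step_N (S u - 1) (P u) (2 * D u) (by linarith [hDnn u]) (s (2*u+1)) ih
      obtain ⟨k, hk⟩ : ∃ k, (S u - 1) + s (2*u+1) = k + 1 :=
        ⟨(S u - 1) + s (2*u+1) - 1, by have := hs (2*u+1); omega⟩
      rw [hk] at h1
      obtain ⟨r, hr⟩ : ∃ r, s (2*u+2) = r + 1 := ⟨s (2*u+2) - 1, by have := hs (2*u+2); omega⟩
      have h2 := step_K k (P u * Nm ^ (s (2*u+1))) (2 * D u) (by linarith [hDnn u]) r h1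
      intro i j
      have hS2 : S (u+1) - 1 = k + 1 := by
        have h3 : S (u+1) = S u + s (2*u+1) := Finset.sum_range_succ _ u
        have h4 : 1 ≤ S u := le_trans hs1 (hSlb u hu) |>.trans' (by omega)
        omega
      have hD2 : 2 * D (u+1) = 2 * D u + 2 * ((r:ℤ) + 1) := by
        have h3 : D (u+1) = D u + (s (2*u+2) : ℤ) := Finset.sum_range_succ _ u
        have h4 : ((s (2*u+2)) : ℤ) = (r : ℤ) + 1 := by exact_mod_cast congrArg (Nat.cast : ℕ → ℤ) hr
        rw [h3, h4]; ring
      rw [hPu, hr, hS2, hD2]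
      exact h2 i j
  -- conclude
  set X := Nm ^ (S t - 1) with hX
  set c := 2 * D t with hc
  have hbound : ∑ i, ∑ j, P t i j ≤
      (∑ i, ∑ j, X i j) + c * (X 0 0 + X 1 0 + X 2 0) := by
    have h1 : ∀ i, ∑ j, P t i j ≤ (∑ j, X i j) + c * X i 0 := by
      intro i
      have k0 := key t ht i 0
      have k1 := key t ht i 1
      have k2 := key t ht i 2
      rw [if_neg (by decide : ¬((0:Fin 3) = 1))] at k0
      rw [if_pos rfl] at k1
      rw [if_neg (by decide : ¬((2:Fin 3) = 1))] at k2
      rw [← hX, ← hc] at k0 k1 k2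
      simp only [Fin.sum_univ_three]
      linarith
    calc ∑ i, ∑ j, P t i j ≤ ∑ i, ((∑ j, X i j) + c * X i 0) :=
          Finset.sum_le_sum fun i _ => h1 i
    _ = (∑ i, ∑ j, X i j) + c * (X 0 0 + X 1 0 + X 2 0) := by
          simp only [Fin.sum_univ_three]
          ring
  have hω : ω₁ (S t) = ∑ i, ∑ j, X i j := hω₁ (S t)
  rw [hω]
  have hcge : (2:ℤ) ≤ c := by
    have : (1:ℤ) ≤ D t := by
      have h5 : ((s (2*0+2)) : ℤ) ≤ D t :=
        Finset.single_le_sum (f := fun i => ((s (2*i+2)) : ℤ)) (fun i _ => by positivity)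
          (Finset.mem_range.mpr ht)
      have h6 : (1:ℤ) ≤ (s 2 : ℤ) := by exact_mod_cast hs 2
      simpa using le_trans h6 h5
    omega
  have hXnn : ∀ i j, 0 ≤ X i j := fun i j => Npow_nonneg _ i j
  have hX11 : X 1 1 = 1 := by rw [hX, Npow_row1]; simp
  have hσ : (X 0 0 + X 1 0 + X 2 0) + 1 ≤ ∑ i, ∑ j, X i j := by
    simp only [Fin.sum_univ_three]
    have := hXnn 0 1; have := hXnn 0 2; have := hXnn 1 2
    have := hXnn 2 1; have := hXnn 2 2; have := hXnn 1 0
    linarith [hX11.ge, hX11.le]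
  have hcol0nn : 0 ≤ X 0 0 + X 1 0 + X 2 0 := by
    have := hXnn 0 0; have := hXnn 1 0; have := hXnn 2 0; linarith
  calc ∑ i, ∑ j, P t i j ≤ (∑ i, ∑ j, X i j) + c * (X 0 0 + X 1 0 + X 2 0) := hbound
  _ ≤ (∑ i, ∑ j, X i j) + c * ((∑ i, ∑ j, X i j) - 1) := by
      have := mul_le_mul_of_nonneg_left (show (X 0 0 + X 1 0 + X 2 0) ≤ (∑ i, ∑ j, X i j) - 1 by linarith)
        (show (0:ℤ) ≤ c by linarith)
      linarith
  _ < (∑ i, ∑ j, X i j) * (1 + c) := by nlinarith
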